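/- arXiv:0709.0478 — 2 statements merged into one kernel-verified Lean document; each statement's English description precedes it below -/
import Mathlib

section
/- Let ω(u,v) = Im ∫_ℝ u conj(v) and η = sech. Set e₁η = -η', e₂η = i x η, e₃η = i η, e₄η = (xη)'. Then ω(e₂η, e₁η) = 1, ω(e₃η, e₄η) = 1, and ω(eᵢη, eⱼη) = 0 for all other pairs i < j (and the form is antisymmetric). -/
open Complex MeasureTheory Filter Set

noncomputable def sech (x : ℝ) : ℝ := 1 / Real.cosh x

/-- The symplectic form ω(u,v) = Im ∫ u conj(v). -/
noncomputable def symp (u v : ℝ → ℂ) : ℝ :=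
  (∫ x : ℝ, u x * (starRingEnd ℂ) (v x)).im

noncomputable def E1 : ℝ → ℂ := fun x => -Complex.ofReal (deriv sech x)
noncomputable def E2 : ℝ → ℂ := fun x => Complex.I * x * (sech x : ℂ)
noncomputable def E3 : ℝ → ℂ := fun x => Complex.I * (sech x : ℂ)
noncomputable def E4 : ℝ → ℂ := fun x => Complex.ofReal (deriv (fun y => y * sech y) x)

/- ### Basic facts about sech -/

lemma sech_pos (x : ℝ) : 0 < sech x := by
  simp only [sech]
  positivity

lemma sech_even (x : ℝ) : sech (-x) = sech x := by simp [sech]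

lemma hasDerivAt_sech (x : ℝ) :
    HasDerivAt sech (-(Real.sinh x / Real.cosh x ^ 2)) x := by
  have h := (Real.hasDerivAt_cosh x).inv (ne_of_gt (Real.cosh_pos x))
  have e : Real.cosh⁻¹ = sech := by
    funext y; simp [sech, one_div]
  rw [e] at h
  refine h.congr_deriv ?_
  ring

lemma deriv_sech (x : ℝ) : deriv sech x = -(Real.sinh x / Real.cosh x ^ 2) :=
  (hasDerivAt_sech x).deriv

lemma deriv_sech_odd (x : ℝ) : deriv sech (-x) = -deriv sech x := by
  rw [deriv_sech, deriv_sech, Real.sinh_neg, Real.cosh_neg]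
  ring

lemma deriv_xsech (x : ℝ) :
    deriv (fun y => y * sech y) x = sech x + x * deriv sech x := by
  have h := (hasDerivAt_id x).mul (hasDerivAt_sech x)
  simp only [id_eq] at h
  rw [show (fun y => y * sech y) = id * sech from rfl, h.deriv, deriv_sech]
  ring

lemma hasDerivAt_tanh (x : ℝ) : HasDerivAt Real.tanh (sech x ^ 2) x := by
  have h := (Real.hasDerivAt_sinh x).div (Real.hasDerivAt_cosh x)
    (ne_of_gt (Real.cosh_pos x))
  have e : Real.sinh / Real.cosh = Real.tanh := by
    funext y; simp [Real.tanh_eq_sinh_div_cosh]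
  rw [e] at h
  refine h.congr_deriv ?_
  have h1 : Real.cosh x ^ 2 - Real.sinh x ^ 2 = 1 := Real.cosh_sq_sub_sinh_sq x
  have h2 : Real.cosh x ≠ 0 := ne_of_gt (Real.cosh_pos x)
  rw [sech]; field_simp
  nlinarith [h1]

/- ### Limits -/

lemma tanh_eq' (x : ℝ) :
    Real.tanh x = (1 - Real.exp (-(2 * x))) / (1 + Real.exp (-(2 * x))) := by
  rw [Real.tanh_eq_sinh_div_cosh, Real.sinh_eq, Real.cosh_eq]
  have h1 : Real.exp (-x) = (Real.exp x)⁻¹ := Real.exp_neg x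
  have h2 : Real.exp (-(2 * x)) = ((Real.exp x) ^ 2)⁻¹ := by
    rw [Real.exp_neg, two_mul, Real.exp_add, sq]
  have h3 := Real.exp_pos x
  rw [h1, h2]
  have h4 : Real.exp x ≠ 0 := ne_of_gt h3
  field_simp

lemma tendsto_exp_neg_two_mul : Tendsto (fun x : ℝ => Real.exp (-(2 * x))) atTop (nhds 0) := by
  have h : Tendsto (fun x : ℝ => 2 * x) atTop atTop :=
    (tendsto_id (α := ℝ)).const_mul_atTop two_pos
  exact Real.tendsto_exp_neg_atTop_nhds_zero.comp h

lemma tanh_tendsto_atTop : Tendsto Real.tanh atTop (nhds 1) := by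
  have h := tendsto_exp_neg_two_mul
  have h2 : Tendsto (fun x : ℝ => (1 - Real.exp (-(2 * x))) / (1 + Real.exp (-(2 * x))))
      atTop (nhds ((1 - 0) / (1 + 0))) :=
    (tendsto_const_nhds.sub h).div (tendsto_const_nhds.add h) (by norm_num)
  simp only [sub_zero, add_zero, div_one] at h2
  exact Tendsto.congr (fun x => (tanh_eq' x).symm) h2

lemma tanh_tendsto_atBot : Tendsto Real.tanh atBot (nhds (-1)) := by
  have h := tanh_tendsto_atTop.comp tendsto_neg_atBot_atTop
  have h2 : Tendsto (fun x : ℝ => -Real.tanh x) atBot (nhds 1) := by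
    apply h.congr
    intro x
    simp [Real.tanh_neg]
  have := h2.neg
  simpa using this

lemma xsech_sq_tendsto_atTop : Tendsto (fun x : ℝ => x * sech x ^ 2) atTop (nhds 0) := by
  have hb : Tendsto (fun x : ℝ => 4 * (x ^ 1 * Real.exp (-x))) atTop (nhds (4 * 0)) :=
    (Real.tendsto_pow_mul_exp_neg_atTop_nhds_zero 1).const_mul 4
  rw [mul_zero] at hb
  apply squeeze_zero_norm' _ hb
  filter_upwards [eventually_ge_atTop (0 : ℝ)] with x hx
  have hsech : sech x ≤ 2 * Real.exp (-x) := by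
    rw [sech, div_le_iff₀ (Real.cosh_pos x)]
    have := Real.cosh_eq x
    have h2 := Real.exp_pos x
    have h3 := Real.exp_pos (-x)
    have h4 : Real.exp (-x) * Real.exp x = 1 := by
      rw [← Real.exp_add]; simp
    nlinarith
  have hsp := sech_pos x
  have hexp : Real.exp (-x) ≤ 1 := by
    rw [Real.exp_le_one_iff]; linarith
  have h5 : sech x ^ 2 ≤ 4 * Real.exp (-x) := by
    have h6 := Real.exp_pos (-x)
    nlinarith
  rw [Real.norm_of_nonneg (by positivity : (0:ℝ) ≤ x * sech x ^ 2)]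
  calc x * sech x ^ 2 ≤ x * (4 * Real.exp (-x)) := by
        apply mul_le_mul_of_nonneg_left h5 hx
    _ = 4 * (x ^ 1 * Real.exp (-x)) := by ring

lemma xsech_sq_tendsto_atBot : Tendsto (fun x : ℝ => x * sech x ^ 2) atBot (nhds 0) := by
  have h := xsech_sq_tendsto_atTop.comp tendsto_neg_atBot_atTop
  have h2 : Tendsto (fun x : ℝ => -(x * sech x ^ 2)) atBot (nhds 0) := by
    apply h.congr
    intro x
    show (-x) * sech (-x) ^ 2 = -(x * sech x ^ 2)
    rw [sech_even]
    ring
  have := h2.neg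
  simpa using this

/- ### Integrability helpers -/

lemma integrableOn_Iic_of_comp_neg {f : ℝ → ℝ}
    (h : IntegrableOn (fun x => f (-x)) (Ioi (0:ℝ))) : IntegrableOn f (Iic (0:ℝ)) := by
  rw [← Measure.map_neg_eq_self (volume : Measure ℝ)]
  have m : MeasurableEmbedding fun x : ℝ => -x :=
    (Homeomorph.neg ℝ).measurableEmbedding
  rw [m.integrableOn_map_iff]
  simp_rw [Function.comp_def, neg_preimage, neg_Iic, neg_zero]
  exact (integrableOn_Ici_iff_integrableOn_Ioi).mpr h

lemma integrable_of_halves {f : ℝ → ℝ} (h1 : IntegrableOn f (Iic (0:ℝ)))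
    (h2 : IntegrableOn f (Ioi (0:ℝ))) : Integrable f := by
  rw [← integrableOn_univ, ← Set.Iic_union_Ioi (a := (0:ℝ))]
  exact h1.union h2

lemma integrable_sech_sq : Integrable (fun x : ℝ => sech x ^ 2) := by
  have hIoi : IntegrableOn (fun x : ℝ => sech x ^ 2) (Ioi (0:ℝ)) :=
    integrableOn_Ioi_deriv_of_nonneg' (fun x _ => hasDerivAt_tanh x)
      (fun x _ => sq_nonneg _) tanh_tendsto_atTop
  refine integrable_of_halves (integrableOn_Iic_of_comp_neg ?_) hIoi
  simpa [sech_even] using hIoi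

noncomputable def Gfun (x : ℝ) : ℝ := (x * sech x ^ 2 - Real.tanh x) / 2

lemma hasDerivAt_Gfun (x : ℝ) :
    HasDerivAt Gfun (x * sech x * deriv sech x) x := by
  have hs := hasDerivAt_sech x
  have h1 : HasDerivAt (fun y => y * sech y ^ 2)
      (1 * sech x ^ 2 + x * (2 * sech x ^ 1 * -(Real.sinh x / Real.cosh x ^ 2))) x :=
    (hasDerivAt_id x).mul (hs.pow 2)
  have h2 := (h1.sub (hasDerivAt_tanh x)).div_const 2
  have e : (fun x => ((fun y => y * sech y ^ 2) - Real.tanh) x / 2) = Gfun := rfl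
  rw [e] at h2
  refine h2.congr_deriv ?_
  rw [deriv_sech]
  ring

lemma Gfun_tendsto_atTop : Tendsto Gfun atTop (nhds (-(1/2) : ℝ)) := by
  have h := (xsech_sq_tendsto_atTop.sub tanh_tendsto_atTop).div_const 2
  norm_num at h
  exact h

lemma Gfun_tendsto_atBot : Tendsto Gfun atBot (nhds ((1/2) : ℝ)) := by
  have h := (xsech_sq_tendsto_atBot.sub tanh_tendsto_atBot).div_const 2
  norm_num at h
  exact h

lemma B_even (x : ℝ) : (-x) * sech (-x) * deriv sech (-x) = x * sech x * deriv sech x := by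
  rw [sech_even, deriv_sech_odd]
  ring

lemma integrable_B : Integrable (fun x : ℝ => x * sech x * deriv sech x) := by
  have hIoi : IntegrableOn (fun x : ℝ => x * sech x * deriv sech x) (Ioi (0:ℝ)) := by
    apply integrableOn_Ioi_deriv_of_nonpos' (fun x _ => hasDerivAt_Gfun x) _
      Gfun_tendsto_atTop
    intro x hx
    rw [deriv_sech]
    have h1 : 0 < x := hx
    have h2 := sech_pos x
    have h3 : 0 < Real.sinh x := Real.sinh_pos_iff.mpr h1
    have h4 : 0 < Real.cosh x := Real.cosh_pos x
    have h5 : 0 < Real.sinh x / Real.cosh x ^ 2 := by positivity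
    nlinarith [mul_pos (mul_pos h1 h2) h5]
  refine integrable_of_halves (integrableOn_Iic_of_comp_neg ?_) hIoi
  simpa only [B_even] using hIoi

lemma integral_sech_sq : ∫ x : ℝ, sech x ^ 2 = 2 := by
  have h := integral_of_hasDerivAt_of_tendsto (fun x => hasDerivAt_tanh x)
    integrable_sech_sq tanh_tendsto_atBot tanh_tendsto_atTop
  rw [h]; norm_num

lemma integral_B : ∫ x : ℝ, x * sech x * deriv sech x = -1 := by
  have h := integral_of_hasDerivAt_of_tendsto (fun x => hasDerivAt_Gfun x)
    integrable_B Gfun_tendsto_atBot Gfun_tendsto_atTop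
  rw [h]; norm_num

lemma integral_odd {f : ℝ → ℝ} (h : ∀ x, f (-x) = -f x) : ∫ x : ℝ, f x = 0 := by
  have h1 : ∫ x : ℝ, f (-x) = ∫ x : ℝ, f x := integral_neg_eq_self f volume
  have h2 : ∫ x : ℝ, f (-x) = -∫ x : ℝ, f x := by
    simp_rw [h]
    exact integral_neg f
  linarith

/- ### reduction of complex integrals to real ones -/

lemma symp_eq_integral {u v : ℝ → ℂ} {g : ℝ → ℝ}
    (h : ∀ x, u x * (starRingEnd ℂ) (v x) = Complex.I * (g x : ℂ)) :
    symp u v = ∫ x : ℝ, g x := by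
  unfold symp
  simp_rw [h]
  rw [integral_const_mul,
    show (∫ x : ℝ, ((g x : ℝ) : ℂ)) = ((∫ x : ℝ, g x : ℝ) : ℂ) from integral_ofReal]
  simp

lemma symp_eq_zero {u v : ℝ → ℂ} {g : ℝ → ℝ}
    (h : ∀ x, u x * (starRingEnd ℂ) (v x) = (g x : ℂ)) :
    symp u v = 0 := by
  unfold symp
  simp_rw [h]
  rw [show (∫ x : ℝ, ((g x : ℝ) : ℂ)) = ((∫ x : ℝ, g x : ℝ) : ℂ) from integral_ofReal]
  simp

lemma integral_C : ∫ x : ℝ, sech x * deriv (fun y => y * sech y) x = 1 := by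
  have e : (fun x : ℝ => sech x * deriv (fun y => y * sech y) x)
      = fun x => sech x ^ 2 + x * sech x * deriv sech x := by
    funext x; rw [deriv_xsech]; ring
  rw [e, integral_add integrable_sech_sq integrable_B, integral_sech_sq, integral_B]
  norm_num

lemma xsech_even (x : ℝ) : deriv (fun y => y * sech y) (-x) = deriv (fun y => y * sech y) x := by
  rw [deriv_xsech, deriv_xsech, sech_even, deriv_sech_odd]
  ring

theorem symplectic_form_on_soliton_manifold :
    symp E2 E1 = 1 ∧ symp E3 E4 = 1 ∧
    symp E1 E2 = -1 ∧ symp E4 E3 = -1 ∧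
    symp E1 E3 = 0 ∧ symp E3 E1 = 0 ∧
    symp E1 E4 = 0 ∧ symp E4 E1 = 0 ∧
    symp E2 E3 = 0 ∧ symp E3 E2 = 0 ∧
    symp E2 E4 = 0 ∧ symp E4 E2 = 0 := by
  refine ⟨?_, ?_, ?_, ?_, ?_, ?_, ?_, ?_, ?_, ?_, ?_, ?_⟩
  · rw [symp_eq_integral (g := fun x => -(x * sech x * deriv sech x)) (fun x => by
      simp only [E1, E2, map_mul, map_neg, Complex.conj_I, Complex.conj_ofReal]
      push_cast
      ring)]
    rw [integral_neg, integral_B]; norm_num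
  · rw [symp_eq_integral (g := fun x => sech x * deriv (fun y => y * sech y) x) (fun x => by
      simp only [E3, E4, map_mul, Complex.conj_ofReal]
      push_cast
      ring)]
    exact integral_C
  · rw [symp_eq_integral (g := fun x => x * sech x * deriv sech x) (fun x => by
      simp only [E1, E2, map_mul, map_neg, Complex.conj_I, Complex.conj_ofReal]
      push_cast
      ring)]
    exact integral_B
  · rw [symp_eq_integral (g := fun x => -(sech x * deriv (fun y => y * sech y) x)) (fun x => by
      simp only [E3, E4, map_mul, map_neg, Complex.conj_I, Complex.conj_ofReal]
      push_cast
      ring)]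
    rw [integral_neg, integral_C]
  · rw [symp_eq_integral (g := fun x => sech x * deriv sech x) (fun x => by
      simp only [E1, E3, map_mul, map_neg, Complex.conj_I, Complex.conj_ofReal]
      push_cast
      ring)]
    apply integral_odd
    intro x
    rw [sech_even, deriv_sech_odd]
    ring
  · rw [symp_eq_integral (g := fun x => -(sech x * deriv sech x)) (fun x => by
      simp only [E1, E3, map_mul, map_neg, Complex.conj_I, Complex.conj_ofReal]
      push_cast
      ring)]
    apply integral_odd
    intro x
    rw [sech_even, deriv_sech_odd]
    ring
  · exact symp_eq_zero (g := fun x => -(deriv sech x) * deriv (fun y => y * sech y) x)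
      (fun x => by
        simp only [E1, E4, map_neg, Complex.conj_ofReal]
        push_cast
        ring)
  · exact symp_eq_zero (g := fun x => deriv (fun y => y * sech y) x * -(deriv sech x))
      (fun x => by
        simp only [E1, E4, map_neg, Complex.conj_ofReal]
        push_cast
        ring)
  · exact symp_eq_zero (g := fun x => x * sech x * sech x)
      (fun x => by
        simp only [E2, E3, map_mul, Complex.conj_I, Complex.conj_ofReal]
        push_cast
        ring_nf
        simp [Complex.I_sq])
  · exact symp_eq_zero (g := fun x => sech x * (x * sech x))
      (fun x => by
        simp only [E2, E3, map_mul, Complex.conj_I, Complex.conj_ofReal]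
        push_cast
        ring_nf
        simp [Complex.I_sq])
  · rw [symp_eq_integral (g := fun x => x * sech x * deriv (fun y => y * sech y) x) (fun x => by
      simp only [E2, E4, map_mul, Complex.conj_ofReal]
      push_cast
      ring)]
    apply integral_odd
    intro x
    rw [sech_even, xsech_even]
    ring
  · rw [symp_eq_integral (g := fun x => -(deriv (fun y => y * sech y) x * (x * sech x)))
      (fun x => by
        simp only [E2, E4, map_mul, map_neg, Complex.conj_I, Complex.conj_ofReal]
        push_cast
        ring)]
    apply integral_odd
    intro x
    rw [sech_even, xsech_even]
    ring
end

section
/- Suppose b, w : ℝ → ℝ are C¹ and satisfy |b'(t)| ≤ |w(t)| and |w'(t)| ≤ h²|b(t)| for all t ≥ 0, where h > 0. Then for all t ≥ 0, |b(t)| ≤ √2 max(h|b(0)|, |w(0)|) e^{ht}/h and |w(t)| ≤ √2 max(h|b(0)|, |w(0)|) e^{ht}. -/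
theorem gronwall_estimate (h : ℝ) (hh : 0 < h) (b w : ℝ → ℝ)
    (hb : ContDiff ℝ 1 b) (hw : ContDiff ℝ 1 w)
    (hb' : ∀ t, 0 ≤ t → |deriv b t| ≤ |w t|)
    (hw' : ∀ t, 0 ≤ t → |deriv w t| ≤ h^2 * |b t|) :
    ∀ t, 0 ≤ t →
      |b t| ≤ Real.sqrt 2 * max (h * |b 0|) (|w 0|) * Real.exp (h * t) / h ∧
      |w t| ≤ Real.sqrt 2 * max (h * |b 0|) (|w 0|) * Real.exp (h * t) := by
  intro t ht
  set M := max (h * |b 0|) (|w 0|) with hM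
  have hM0 : 0 ≤ M := le_trans (abs_nonneg _) (le_max_right _ _)
  set V : ℝ → ℝ := fun s => h ^ 2 * (b s) ^ 2 + (w s) ^ 2 with hVdef
  set V' : ℝ → ℝ := fun s => h ^ 2 * (2 * b s * deriv b s) + 2 * w s * deriv w s with hV'def
  have hbd : Differentiable ℝ b := hb.differentiable one_ne_zero
  have hwd : Differentiable ℝ w := hw.differentiable one_ne_zero
  have hVderiv : ∀ s, HasDerivAt V (V' s) s := by
    intro s
    have h1 : HasDerivAt (fun u => (b u) ^ 2) (2 * b s * deriv b s) s := by
      have := ((hbd s).hasDerivAt.fun_pow 2)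
      simpa [pow_one, mul_comm, mul_assoc, mul_left_comm] using this
    have h2 : HasDerivAt (fun u => (w u) ^ 2) (2 * w s * deriv w s) s := by
      have := ((hwd s).hasDerivAt.fun_pow 2)
      simpa [pow_one, mul_comm, mul_assoc, mul_left_comm] using this
    exact (h1.const_mul (h ^ 2)).add h2
  -- Gronwall: |V s| ≤ V 0 * exp (2h s) on [0, t]
  have key : ∀ s ∈ Set.Icc (0:ℝ) t, ‖V s‖ ≤ gronwallBound ‖V 0‖ (2 * h) 0 (s - 0) := by
    apply norm_le_gronwallBound_of_norm_deriv_right_le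
    · exact ((continuous_const.mul ((hb.continuous).pow 2)).add ((hw.continuous).pow 2)).continuousOn
    · intro x _; exact (hVderiv x).hasDerivWithinAt
    · exact le_rfl
    · intro x hx
      have hxpos : 0 ≤ x := hx.1
      have hb'x := hb' x hxpos
      have hw'x := hw' x hxpos
      have habs : |V' x| ≤ 4 * h ^ 2 * |b x| * |w x| := by
        have : |V' x| ≤ h ^ 2 * (2 * |b x| * |deriv b x|) + 2 * |w x| * |deriv w x| := by
          calc |V' x| ≤ |h ^ 2 * (2 * b x * deriv b x)| + |2 * w x * deriv w x| :=
                abs_add_le _ _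
            _ = h ^ 2 * (2 * |b x| * |deriv b x|) + 2 * |w x| * |deriv w x| := by
                rw [abs_mul, abs_mul, abs_mul, abs_mul, abs_mul]
                simp [abs_of_nonneg (sq_nonneg h)]
        refine this.trans ?_
        have hb2 : 0 ≤ |b x| := abs_nonneg _
        have hw2 : 0 ≤ |w x| := abs_nonneg _
        nlinarith [mul_le_mul_of_nonneg_left hb'x hb2, mul_le_mul_of_nonneg_left hw'x hw2,
          mul_le_mul_of_nonneg_left hb'x (mul_nonneg (sq_nonneg h) hb2), sq_nonneg h]
      have hAM : 4 * h ^ 2 * |b x| * |w x| ≤ 2 * h * V x := by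
        have := sq_nonneg (h * |b x| - |w x|)
        have hb2 : (b x) ^ 2 = |b x| ^ 2 := (sq_abs _).symm
        have hw2 : (w x) ^ 2 = |w x| ^ 2 := (sq_abs _).symm
        simp only [hVdef]
        rw [hb2, hw2]
        nlinarith [mul_nonneg hh.le (sq_nonneg (h * |b x| - |w x|))]
      have hVnonneg : 0 ≤ V x := by positivity
      rw [Real.norm_eq_abs, Real.norm_eq_abs, abs_of_nonneg hVnonneg, add_zero]
      exact habs.trans hAM
  have hVt := key t ⟨ht, le_rfl⟩
  rw [sub_zero, gronwallBound_ε0, Real.norm_eq_abs, Real.norm_eq_abs] at hVt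
  have hV0nonneg : 0 ≤ V 0 := by positivity
  have hVtnonneg : 0 ≤ V t := by positivity
  rw [abs_of_nonneg hVtnonneg, abs_of_nonneg hV0nonneg] at hVt
  -- V 0 ≤ 2 * M ^ 2
  have hV0le : V 0 ≤ 2 * M ^ 2 := by
    have h1 : h ^ 2 * (b 0) ^ 2 = (h * |b 0|) ^ 2 := by
      rw [mul_pow, sq_abs]
    have h2 : (w 0) ^ 2 = |w 0| ^ 2 := (sq_abs _).symm
    have h3 : h * |b 0| ≤ M := le_max_left _ _
    have h4 : |w 0| ≤ M := le_max_right _ _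
    have h5 : 0 ≤ h * |b 0| := by positivity
    simp only [hVdef]
    rw [h1, h2]
    nlinarith [mul_self_le_mul_self h5 h3, mul_self_le_mul_self (abs_nonneg (w 0)) h4]
  have hexp : 0 < Real.exp (h * t) := Real.exp_pos _
  have hVle : V t ≤ 2 * M ^ 2 * Real.exp (2 * h * t) := by
    refine hVt.trans ?_
    exact mul_le_mul_of_nonneg_right hV0le (Real.exp_pos _).le
  have hexpsq : Real.exp (2 * h * t) = (Real.exp (h * t)) ^ 2 := by
    rw [← Real.exp_nat_mul]; ring_nf
  have hsq2 : (Real.sqrt 2) ^ 2 = 2 := Real.sq_sqrt (by norm_num)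
  have hRHSnn : 0 ≤ Real.sqrt 2 * M * Real.exp (h * t) := by positivity
  have hwt : |w t| ≤ Real.sqrt 2 * M * Real.exp (h * t) := by
    have h1 : |w t| ^ 2 ≤ (Real.sqrt 2 * M * Real.exp (h * t)) ^ 2 := by
      have : (w t) ^ 2 ≤ V t := by simp only [hVdef]; nlinarith [sq_nonneg (h * b t)]
      rw [sq_abs]
      calc (w t) ^ 2 ≤ 2 * M ^ 2 * Real.exp (2 * h * t) := this.trans hVle
        _ = (Real.sqrt 2 * M * Real.exp (h * t)) ^ 2 := by
            rw [hexpsq, mul_pow, mul_pow, hsq2]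
    nlinarith [abs_nonneg (w t)]
  have hbt : h * |b t| ≤ Real.sqrt 2 * M * Real.exp (h * t) := by
    have h1 : (h * |b t|) ^ 2 ≤ (Real.sqrt 2 * M * Real.exp (h * t)) ^ 2 := by
      have : h ^ 2 * (b t) ^ 2 ≤ V t := by simp only [hVdef]; nlinarith [sq_nonneg (w t)]
      rw [mul_pow, sq_abs]
      calc h ^ 2 * (b t) ^ 2 ≤ 2 * M ^ 2 * Real.exp (2 * h * t) := this.trans hVle
        _ = (Real.sqrt 2 * M * Real.exp (h * t)) ^ 2 := by
            rw [hexpsq, mul_pow, mul_pow, hsq2]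
    nlinarith [mul_nonneg hh.le (abs_nonneg (b t))]
  refine ⟨?_, hwt⟩
  rw [le_div_iff₀ hh]
  linarith [hbt]
end
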